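/- Let x be a crossing point of the link diagram K at which the level is not uniform with respect to the level partition associated to a join irreducible M(j,k). Then the marker of the minimal Kauffman state at x lies in the region where the level decreases in clockwise direction, and the marker of S(j,k) at x lies in the region where the level increases in clockwise direction. -/

import Mathlib

/-- An abstract combinatorial model of a connected link diagram `K`, together with a
distinguished segment `i` and the markers of the minimal Kauffman state relative to `i`.
`K0` is the set of crossing points, `K1` the set of segments, `Region` the set of regions
of the diagram.  At each crossing `x` the four segments are `seg x 0, …, seg x 3`, listed
in clockwise order, and `corner x p` is the region at `x` lying between `seg x p` and
`seg x (p+1)` in clockwise direction; a marker at `x` occupies one of these four corners. -/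
structure Diagram where
  K0 : Type
  K1 : Type
  Region : Type
  fin0 : Fintype K0
  fin1 : Fintype K1
  finR : Fintype Region
  seg : K0 → Fin 4 → K1
  corner : K0 → Fin 4 → Region
  /-- every segment has exactly two endpoints (= crossing/position pairs) -/
  seg_two : ∀ a : K1, ∃ e₁ e₂ : K0 × Fin 4, e₁ ≠ e₂ ∧ seg e₁.1 e₁.2 = a ∧
    seg e₂.1 e₂.2 = a ∧ ∀ e : K0 × Fin 4, seg e.1 e.2 = a → e = e₁ ∨ e = e₂
  /-- the distinguished segment `i` -/
  i : K1
  /-- the markers of the minimal Kauffman state relative to `i` -/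
  minState : K0 → Fin 4

namespace Diagram

/-- The region `R` is one of the (two) regions incident to the segment `a`. -/
def IncidentRegion (D : Diagram) (a : D.K1) (R : D.Region) : Prop :=
  ∃ x p, D.seg x p = a ∧ (R = D.corner x p ∨ R = D.corner x (p + 3))

/-- `m` is a Kauffman state relative to the segment `D.i`: every region of the diagram,
except the two regions incident to `i`, contains exactly one marker. -/
def IsState (D : Diagram) (m : D.K0 → Fin 4) : Prop :=
  ∀ R : D.Region, ¬ D.IncidentRegion D.i R → ∃! x : D.K0, D.corner x (m x) = R

/-- Clockwise rank of the position `p` at the crossing `x`, starting right after the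
marker of the minimal state: the segment immediately clockwise of the minimal-state
marker has rank `0`, and the one immediately counterclockwise of it has rank `3`.
Thus `seg x q` lies between `seg x p` and the minimal-state marker at `x` in clockwise
direction if and only if `rk x p < rk x q`. -/
def rk (D : Diagram) (x : D.K0) (p : Fin 4) : ℕ := (p - D.minState x - 1 : Fin 4).val

/-- `S` is closed in `T` under successors (relative to the minimal state): for all
segments `s ∈ S`, `t ∈ T` with a common endpoint `x` such that `t` lies between `s` and
the minimal-state marker at `x` in clockwise direction, `t ∈ S`. -/
def ClosedIn (D : Diagram) (T S : Set D.K1) : Prop :=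
  ∀ (x : D.K0) (p q : Fin 4), D.seg x p ∈ S → D.seg x q ∈ T →
    D.rk x p < D.rk x q → D.seg x q ∈ S

/-- The closure of `S` in `T`: the smallest subset of `T` containing `S` that is closed
in `T` under successors. -/
def closureIn (D : Diagram) (T S : Set D.K1) : Set D.K1 :=
  ⋂₀ {U : Set D.K1 | S ⊆ U ∧ U ⊆ T ∧ D.ClosedIn T U}

/-- two segments share an endpoint -/
def Meets (D : Diagram) (a b : D.K1) : Prop :=
  ∃ (x : D.K0) (p q : Fin 4), D.seg x p = a ∧ D.seg x q = b

/-- Auxiliary recursion for the level sets associated to the join irreducible `M(j,k)`: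
`(levelAux j m).1` is the level set `K(k-m)`, and `(levelAux j m).2` is the union
`K(k) ∪ K(k-1) ∪ ⋯ ∪ K(k-m)`. -/
def levelAux (D : Diagram) (j : D.K1) : ℕ → Set D.K1 × Set D.K1
  | 0 => (D.closureIn Set.univ {j}, D.closureIn Set.univ {j})
  | m + 1 =>
      let C := (levelAux D j m).2
      let N := D.closureIn Cᶜ {e | e ∈ Cᶜ ∧ ∃ b ∈ (levelAux D j m).1, D.Meets e b}
      (N, C ∪ N)

/-- The level set `K(d)` of the partition `K_1 = ⊔_{d=0}^{k} K(d)` associated to the join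
irreducible `M(j,k)`: `K(k)` is the closure of `{j}` in `K_1`; recursively, for
`d = k-1, …, 1`, `K(d)` is the closure, in the complement of `⋃_{ℓ>d} K(ℓ)`, of the set
of segments of that complement incident to a segment of `K(d+1)`; and `K(0)` is the
complement of `⋃_{ℓ>0} K(ℓ)`. -/
def Klevel (D : Diagram) (j : D.K1) (k : ℕ) (d : ℕ) : Set D.K1 :=
  if d = 0 then ((D.levelAux j (k - 1)).2)ᶜ else (D.levelAux j (k - d)).1

/-- the level of a segment: the `d` with `a ∈ K(d)` -/
noncomputable def level (D : Diagram) (j : D.K1) (k : ℕ) (a : D.K1) : ℕ :=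
  sInf {d : ℕ | a ∈ D.Klevel j k d}

/-- The set of markers `𝒮(j,k)`: at each crossing point, the marker is placed in the
region where the level increases in clockwise direction if such a region exists, and at
the position of the minimal-state marker otherwise. -/
noncomputable def Smark (D : Diagram) (j : D.K1) (k : ℕ) (x : D.K0) : Fin 4 := by
  classical
  exact if h : ∃ p : Fin 4, D.level j k (D.seg x p) < D.level j k (D.seg x (p + 1))
    then h.choose else D.minState x

end Diagram

section Aux

variable (D : Diagram)

lemma aux_closedIn_closureIn (T S : Set D.K1) : D.ClosedIn T (D.closureIn T S) := by
  intro x p q hp hq hlt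
  intro U hU
  exact hU.2.2 x p q (hp U hU) hq hlt

lemma aux_subset_closureIn (T S : Set D.K1) : S ⊆ D.closureIn T S := by
  intro a ha U hU; exact hU.1 ha

lemma aux_closureIn_subset {T S : Set D.K1} (h : S ⊆ T) : D.closureIn T S ⊆ T := by
  intro a ha
  exact ha T ⟨h, le_refl _, fun x p q _ hq _ => hq⟩

/-- abbreviation: the cumulative union `C m` -/
def Cset (j : D.K1) (m : ℕ) : Set D.K1 := (D.levelAux j m).2

/-- abbreviation: the level set `N m = K(k-m)` -/
def Nset (j : D.K1) (m : ℕ) : Set D.K1 := (D.levelAux j m).1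

lemma aux_N0 (j : D.K1) : Nset D j 0 = D.closureIn Set.univ {j} := rfl

lemma aux_C0 (j : D.K1) : Cset D j 0 = D.closureIn Set.univ {j} := rfl

lemma aux_Csucc (j : D.K1) (m : ℕ) :
    Cset D j (m + 1) = Cset D j m ∪ Nset D j (m + 1) := rfl

lemma aux_Nsucc (j : D.K1) (m : ℕ) :
    Nset D j (m + 1) = D.closureIn (Cset D j m)ᶜ
      {e | e ∈ (Cset D j m)ᶜ ∧ ∃ b ∈ Nset D j m, D.Meets e b} := rfl

lemma aux_Nsucc_subset (j : D.K1) (m : ℕ) : Nset D j (m + 1) ⊆ (Cset D j m)ᶜ := by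
  rw [aux_Nsucc]
  exact aux_closureIn_subset D (fun e he => he.1)

lemma aux_N_subset_C (j : D.K1) (m : ℕ) : Nset D j m ⊆ Cset D j m := by
  cases m with
  | zero => exact le_refl _
  | succ n => rw [aux_Csucc]; exact Set.subset_union_right

lemma aux_C_mono (j : D.K1) {m m' : ℕ} (h : m ≤ m') : Cset D j m ⊆ Cset D j m' := by
  induction m' with
  | zero => simpa [Nat.le_zero.mp h] using le_refl (Cset D j 0)
  | succ n ih =>
      rcases Nat.lt_or_ge m (n + 1) with hlt | hge
      · exact (ih (Nat.lt_succ_iff.mp hlt)).trans (by rw [aux_Csucc]; exact Set.subset_union_left)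
      · have : m = n + 1 := le_antisymm h hge
        simp [this]

lemma aux_mem_C_exists (j : D.K1) (m : ℕ) {a : D.K1} (ha : a ∈ Cset D j m) :
    ∃ ℓ ≤ m, a ∈ Nset D j ℓ := by
  induction m with
  | zero => exact ⟨0, le_refl _, ha⟩
  | succ n ih =>
      rw [aux_Csucc] at ha
      rcases ha with ha | ha
      · obtain ⟨ℓ, hℓ, h⟩ := ih ha
        exact ⟨ℓ, hℓ.trans (Nat.le_succ n), h⟩
      · exact ⟨n + 1, le_refl _, ha⟩

lemma aux_Klevel_zero (j : D.K1) (k : ℕ) : D.Klevel j k 0 = (Cset D j (k - 1))ᶜ := by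
  simp [Diagram.Klevel, Cset]

lemma aux_Klevel_pos (j : D.K1) (k : ℕ) {d : ℕ} (hd : d ≠ 0) :
    D.Klevel j k d = Nset D j (k - d) := by
  simp [Diagram.Klevel, hd, Nset]

/-- Key lemma: elements of `C m` have level at least `k - m`. -/
lemma aux_level_ge (j : D.K1) {k : ℕ} (hk : 1 ≤ k) {m : ℕ} (hm : m ≤ k - 1)
    {a : D.K1} (ha : a ∈ Cset D j m) : k - m ≤ D.level j k a := by
  obtain ⟨ℓ, hℓm, haN⟩ := aux_mem_C_exists D j m ha
  have hmem : a ∈ D.Klevel j k (k - ℓ) := by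
    have h1 : k - ℓ ≠ 0 := by omega
    rw [aux_Klevel_pos D j k h1]
    have : k - (k - ℓ) = ℓ := by omega
    rw [this]; exact haN
  have hbdd : ∀ d' ∈ {d : ℕ | a ∈ D.Klevel j k d}, k - m ≤ d' := by
    intro d' hd'
    by_contra hcon
    push_neg at hcon
    have hd'lt : d' < k - m := hcon
    rcases Nat.eq_zero_or_pos d' with h0 | hpos
    · subst h0
      rw [Set.mem_setOf_eq, aux_Klevel_zero] at hd'
      exact hd' (aux_C_mono D j hm ha)
    · rw [Set.mem_setOf_eq, aux_Klevel_pos D j k (by omega : d' ≠ 0)] at hd'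
      have hkd : k - d' ≥ m + 1 := by omega
      obtain ⟨n, hn⟩ : ∃ n, k - d' = n + 1 := ⟨k - d' - 1, by omega⟩
      rw [hn] at hd'
      have := aux_Nsucc_subset D j n hd'
      exact this (aux_C_mono D j (by omega : m ≤ n) ha)
  exact le_csInf ⟨k - ℓ, hmem⟩ hbdd

/-- Monotonicity of the level along the clockwise rank at a crossing. -/
lemma aux_level_mono (j : D.K1) {k : ℕ} (hk : 1 ≤ k) {x : D.K0} {p q : Fin 4}
    (h : D.rk x p < D.rk x q) :
    D.level j k (D.seg x p) ≤ D.level j k (D.seg x q) := by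
  by_cases hne : {d : ℕ | D.seg x p ∈ D.Klevel j k d}.Nonempty
  · have hd : D.seg x p ∈ D.Klevel j k (D.level j k (D.seg x p)) := Nat.sInf_mem hne
    set d := D.level j k (D.seg x p) with hdval
    rcases Nat.eq_zero_or_pos d with h0 | hpos
    · rw [h0]; exact Nat.zero_le _
    · rw [aux_Klevel_pos D j k (by omega : d ≠ 0)] at hd
      rcases Nat.eq_zero_or_pos (k - d) with hℓ0 | hℓpos
      · -- `seg x p` lies in the top level set `K(k)`
        rw [hℓ0, aux_N0] at hd
        have hq : D.seg x q ∈ D.closureIn Set.univ {j} :=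
          aux_closedIn_closureIn D Set.univ {j} x p q hd (Set.mem_univ _) h
        have hqk : k - 0 ≤ D.level j k (D.seg x q) := by
          refine aux_level_ge D j hk (by omega) ?_
          rw [aux_C0]; exact hq
        have hdk : d ≤ k := by
          refine Nat.sInf_le ?_
          rw [Set.mem_setOf_eq, aux_Klevel_pos D j k (by omega : k ≠ 0)]
          simp [Nat.sub_self, aux_N0]; exact hd
        omega
      · -- `seg x p` lies in an intermediate level set
        obtain ⟨n, hn⟩ : ∃ n, k - d = n + 1 := ⟨k - d - 1, by omega⟩
        rw [hn, aux_Nsucc] at hd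
        by_cases hqC : D.seg x q ∈ (Cset D j n)ᶜ
        · have hq : D.seg x q ∈ Nset D j (n + 1) := by
            rw [aux_Nsucc]
            exact aux_closedIn_closureIn D _ _ x p q hd hqC h
          have : k - (n + 1) ≤ D.level j k (D.seg x q) :=
            aux_level_ge D j hk (by omega) (aux_N_subset_C D j (n + 1) hq)
          omega
        · have hq : D.seg x q ∈ Cset D j n := not_not.mp hqC
          have : k - n ≤ D.level j k (D.seg x q) :=
            aux_level_ge D j hk (by omega) hq
          omega
  · have : D.level j k (D.seg x p) = 0 := by
      rw [Set.not_nonempty_iff_eq_empty] at hne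
      simp [Diagram.level, hne]
    rw [this]; exact Nat.zero_le _

end Aux

/-- **Lemma 4.2 (b).** If the level (for the level partition associated to a join
irreducible `M(j,k)`) is not uniform at the crossing point `x`, then the minimal-state
marker at `x` lies in the region where the level decreases in clockwise direction, and
the marker of `𝒮(j,k)` at `x` lies in the region where the level increases in clockwise
direction.  (The corner `c` at `x` lies between `seg x c` and `seg x (c+1)` in clockwise
direction, so the level decreases clockwise there when
`level (seg x (c+1)) < level (seg x c)`, and increases when
`level (seg x c) < level (seg x (c+1))`.) -/
theorem markers_of_not_uniform (D : Diagram) (hmin : D.IsState D.minState)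
    (dim : D.K1 → ℕ) (j : D.K1) (k : ℕ) (hk1 : 1 ≤ k) (hk2 : k ≤ dim j)
    (x : D.K0)
    (hnadouniform : ¬ ∀ p q : Fin 4, D.level j k (D.seg x p) = D.level j k (D.seg x q)) :
    D.level j k (D.seg x (D.minState x + 1)) < D.level j k (D.seg x (D.minState x)) ∧
    D.level j k (D.seg x (D.Smark j k x)) < D.level j k (D.seg x (D.Smark j k x + 1)) := by
  classical
  set m : Fin 4 := D.minState x with hm
  -- the ranks of the four positions in clockwise order starting after the minimal marker
  have hrk : ∀ t : Fin 4, D.rk x (m + 1 + t) = t.val := by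
    intro t
    unfold Diagram.rk
    rw [hm]
    congr 1
    abel
  have hpos : ∀ p : Fin 4, p = m + 1 + (p - m - 1) := by intro p; abel
  set P : Fin 4 → ℕ := fun t => D.level j k (D.seg x (m + 1 + t)) with hP
  have hchain : ∀ s t : Fin 4, s.val < t.val → P s ≤ P t := by
    intro s t hst
    exact aux_level_mono D j hk1 (by rw [hrk, hrk]; exact hst)
  have h01 : P 0 ≤ P 1 := hchain 0 1 (by decide)
  have h12 : P 1 ≤ P 2 := hchain 1 2 (by decide)
  have h23 : P 2 ≤ P 3 := hchain 2 3 (by decide)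
  have hlev : ∀ p : Fin 4, D.level j k (D.seg x p) = P (p - m - 1) := by
    intro p
    rw [hP]
    congr 2
    exact hpos p
  have h03 : P 0 < P 3 := by
    by_contra hcon
    push_neg at hcon
    have he01 : P 0 = P 1 := le_antisymm h01 (le_trans h12 (le_trans h23 hcon))
    have he12 : P 1 = P 2 := le_antisymm h12 (le_trans h23 (le_trans hcon h01))
    have he23 : P 2 = P 3 := le_antisymm h23 (le_trans hcon (le_trans h01 h12))
    have hall : ∀ t : Fin 4, P t = P 0 := by
      intro t
      fin_cases t
      · rfl
      · exact he01.symm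
      · exact (he01.trans he12).symm
      · exact (he01.trans (he12.trans he23)).symm
    exact hnadouniform (fun p q => by rw [hlev p, hlev q, hall (p - m - 1), hall (q - m - 1)])
  -- positions: `m + 1 = m + 1 + 0` and `m = m + 1 + 3`
  have e0 : m + 1 + (0 : Fin 4) = m + 1 := by abel
  have e3 : m + 1 + (3 : Fin 4) = m := by
    have : (1 + 3 : Fin 4) = 0 := rfl
    rw [add_assoc, this, add_zero]
  constructor
  · have : P 0 < P 3 := h03
    rw [hP] at this
    simpa [e0, e3] using this
  · -- the marker of `S(j,k)`
    have hEx : ∃ p : Fin 4, D.level j k (D.seg x p) < D.level j k (D.seg x (p + 1)) := by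
      rcases lt_or_ge (P 0) (P 1) with h | h
      · refine ⟨m + 1 + 0, ?_⟩
        have e : m + 1 + (0 : Fin 4) + 1 = m + 1 + 1 := by rw [add_assoc]; rfl
        rw [e]; exact h
      · rcases lt_or_ge (P 1) (P 2) with h' | h'
        · refine ⟨m + 1 + 1, ?_⟩
          have e : m + 1 + (1 : Fin 4) + 1 = m + 1 + 2 := by rw [add_assoc]; rfl
          rw [e]; exact h'
        · refine ⟨m + 1 + 2, ?_⟩
          have e : m + 1 + (2 : Fin 4) + 1 = m + 1 + 3 := by rw [add_assoc]; rfl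
          rw [e]
          have : P 2 < P 3 := by omega
          exact this
    have hSm : D.Smark j k x = hEx.choose := by
      unfold Diagram.Smark
      rw [dif_pos hEx]
    rw [hSm]
    exact hEx.choose_spec
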